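/- If f : G → H is a surjective group homomorphism between finite groups and A is an implication-based fuzzy subgroup of G with threshold λ, then the image B defined by B(y) = max over x ∈ f⁻¹(y) of A(x) is an implication-based fuzzy subgroup of H with threshold λ. -/
import Mathlib


theorem ib_fuzzy_subgroup_image
    {G H : Type*} [Group G] [Group H] [Fintype G] [Fintype H]
    (f : G →* H) (hf : Function.Surjective f)
    (A : G → ℝ) (lam : ℝ)
    (hA : ∀ x, A x ∈ Set.Icc (0:ℝ) 1) (hlam : lam ∈ Set.Ioc (0:ℝ) 1)
    (hmul : ∀ x y : G, min 1 (1 - min (A x) (A y) + A (x * y)) ≥ lam)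
    (hinv : ∀ x : G, min 1 (1 - A x + A x⁻¹) ≥ lam)
    (B : H → ℝ) (hBdef : ∀ u : H, B u = sSup (A '' (f ⁻¹' {u}))) :
    (∀ u v : H, min 1 (1 - min (B u) (B v) + B (u * v)) ≥ lam) ∧
    (∀ u : H, min 1 (1 - B u + B u⁻¹) ≥ lam) := by
  have hS : ∀ u : H, ∃ x : G, f x = u ∧ A x = B u ∧ ∀ z : G, f z = u → A z ≤ B u := by
    intro u
    have hne : (A '' (f ⁻¹' {u})).Nonempty := by
      obtain ⟨x, hx⟩ := hf u
      exact ⟨A x, x, hx, rfl⟩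
    have hfin : (A '' (f ⁻¹' {u})).Finite := Set.toFinite _
    have hmem := hne.csSup_mem hfin
    rw [hBdef u]
    obtain ⟨x, hxu, hx⟩ := hmem
    exact ⟨x, hxu, hx, fun z hz => le_csSup hfin.bddAbove ⟨z, hz, rfl⟩⟩
  constructor
  · intro u v
    obtain ⟨x, hxu, hxB, _⟩ := hS u
    obtain ⟨y, hyv, hyB, _⟩ := hS v
    obtain ⟨w, hw, hwB, hwmax⟩ := hS (u * v)
    have h1 : A (x * y) ≤ B (u * v) := hwmax _ (by rw [map_mul, hxu, hyv])
    refine le_min hlam.2 ?_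
    calc lam ≤ min 1 (1 - min (A x) (A y) + A (x * y)) := hmul x y
      _ ≤ 1 - min (A x) (A y) + A (x * y) := min_le_right _ _
      _ ≤ 1 - min (B u) (B v) + B (u * v) := by rw [← hxB, ← hyB]; linarith
  · intro u
    obtain ⟨x, hxu, hxB, _⟩ := hS u
    obtain ⟨w, hw, hwB, hwmax⟩ := hS u⁻¹
    have h1 : A x⁻¹ ≤ B u⁻¹ := hwmax _ (by rw [map_inv, hxu])
    refine le_min hlam.2 ?_
    calc lam ≤ min 1 (1 - A x + A x⁻¹) := hinv x
      _ ≤ 1 - A x + A x⁻¹ := min_le_right _ _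
      _ ≤ 1 - B u + B u⁻¹ := by rw [← hxB]; linarith
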